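/- Let ρ : {1,2,3,…} → ℝ, let F(z) = ∑_{n≥1} ( ∑_{T plane tree, |T|=n} ∏_{v∈T} ρ(h_v) ) z^n be the hook-weight generating function of plane trees, and let G(z) = (1 − F(z))^{-1} be the plane forest generating function (G has constant term 1, hence is invertible in the ring of formal power series over ℝ). Then for every n ≥ 1, ρ(n)·[z^{n-1}]G(z) = −[z^n] G(z)^{-1}. -/

import Mathlib

/-- A plane tree (ordered rooted tree): a root together with a finite
sequence of plane trees (its root subtrees). -/
inductive PlaneTree : Type where
  | node : List PlaneTree → PlaneTree

namespace PlaneTree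

/-- The size of a plane tree: its number of vertices. -/
def size : PlaneTree → ℕ
  | node ts => 1 + (ts.attach.map fun t => size t.1).sum
decreasing_by simp only [PlaneTree.node.sizeOf_spec]; have := List.sizeOf_lt_of_mem t.2; omega

/-- The degree weight `w_deg(T) = ∏_{v ∈ T} φ_{d(v)}`, where `d(v)` is the
out-degree of the vertex `v`. -/
noncomputable def degWeight (φ : ℕ → ℝ) : PlaneTree → ℝ
  | node ts => φ ts.length * (ts.attach.map fun t => degWeight φ t.1).prod
decreasing_by simp only [PlaneTree.node.sizeOf_spec]; have := List.sizeOf_lt_of_mem t.2; omega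

/-- The hook weight `w_h(T) = ∏_{v ∈ T} ρ(h_v)`, where the hook length `h_v`
is the number of vertices of the subtree of `T` rooted at `v`. -/
noncomputable def hookWeight (ρ : ℕ → ℝ) : PlaneTree → ℝ
  | node ts => ρ (size (node ts)) * (ts.attach.map fun t => hookWeight ρ t.1).prod
decreasing_by simp only [PlaneTree.node.sizeOf_spec]; have := List.sizeOf_lt_of_mem t.2; omega

end PlaneTree

namespace PlaneTree

lemma size_node (ts : List PlaneTree) : size (node ts) = 1 + (ts.map size).sum := by
  rw [size]
  congr 1
  rw [List.map_attach_eq_pmap]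
  simp

lemma hookWeight_node (ρ : ℕ → ℝ) (ts : List PlaneTree) :
    hookWeight ρ (node ts) = ρ (size (node ts)) * (ts.map (hookWeight ρ)).prod := by
  rw [hookWeight]
  congr 1
  rw [List.map_attach_eq_pmap]
  simp

lemma one_le_size (T : PlaneTree) : 1 ≤ T.size := by
  cases T with
  | node ts => rw [size_node]; omega

end PlaneTree

open PlaneTree

lemma finite_size_le (n : ℕ) : {T : PlaneTree | T.size ≤ n}.Finite := by
  induction n with
  | zero =>
    convert Set.finite_empty
    ext T
    simp only [Set.mem_setOf_eq, Set.mem_empty_iff_false, iff_false]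
    have := one_le_size T
    omega
  | succ n ih =>
    haveI : Finite {T : PlaneTree // T.size ≤ n} := ih.to_subtype
    have hlists : {l : List {T : PlaneTree // T.size ≤ n} | l.length ≤ n}.Finite :=
      List.finite_length_le _ n
    have himg := hlists.image (fun l => PlaneTree.node (l.map Subtype.val))
    refine himg.subset ?_
    rintro T hT
    cases T with
    | node ts =>
      rw [Set.mem_setOf_eq, size_node] at hT
      have hmem : ∀ t ∈ ts, t.size ≤ n := by
        intro t ht
        have h1 : t.size ≤ (ts.map size).sum := List.le_sum_of_mem (List.mem_map_of_mem ht)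
        have h2 : ∀ t' ∈ ts, 1 ≤ t'.size := fun t' _ => one_le_size t'
        omega
      have hlen : ts.length ≤ (ts.map size).sum := by
        calc ts.length = (ts.map size).length := (List.length_map _).symm
        _ ≤ (ts.map size).sum := List.length_le_sum_of_one_le _ (by
            intro x hx
            obtain ⟨t, ht, rfl⟩ := List.mem_map.1 hx
            exact one_le_size t)
      refine ⟨ts.pmap (fun t ht => (⟨t, ht⟩ : {T : PlaneTree // T.size ≤ n})) hmem, ?_, ?_⟩
      · simp only [Set.mem_setOf_eq, List.length_pmap]
        omega
      · simp only []
        congr 1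
        rw [List.map_pmap]
        simp

instance finite_size_eq (n : ℕ) : Finite {T : PlaneTree // T.size = n} :=
  ((finite_size_le n).subset (fun T hT => le_of_eq hT)).to_subtype

instance finite_forest (m : ℕ) : Finite {L : List PlaneTree // (L.map size).sum = m} := by
  haveI : Finite {T : PlaneTree // T.size ≤ m} := (finite_size_le m).to_subtype
  have hlists : {l : List {T : PlaneTree // T.size ≤ m} | l.length ≤ m}.Finite :=
    List.finite_length_le _ m
  have himg := hlists.image (fun l => l.map Subtype.val)
  refine Set.Finite.to_subtype (himg.subset ?_)
  rintro L hL
  replace hL : (L.map size).sum = m := hL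
  have hmem : ∀ t ∈ L, t.size ≤ m := by
    intro t ht
    have h1 : t.size ≤ (L.map size).sum := List.le_sum_of_mem (List.mem_map_of_mem ht)
    omega
  have hlen : L.length ≤ m := by
    have : L.length ≤ (L.map size).sum := by
      calc L.length = (L.map size).length := (List.length_map _).symm
      _ ≤ (L.map size).sum := List.length_le_sum_of_one_le _ (by
          intro x hx
          obtain ⟨t, ht, rfl⟩ := List.mem_map.1 hx
          exact one_le_size t)
    omega
  refine ⟨L.pmap (fun t ht => (⟨t, ht⟩ : {T : PlaneTree // T.size ≤ m})) hmem, by simp only [Set.mem_setOf_eq, List.length_pmap]; exact hlen, ?_⟩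
  simp only []
  rw [List.map_pmap]
  simp

noncomputable def fseq (ρ : ℕ → ℝ) (n : ℕ) : ℝ :=
  ∑' T : {T : PlaneTree // T.size = n}, T.1.hookWeight ρ

noncomputable def gseq (ρ : ℕ → ℝ) (m : ℕ) : ℝ :=
  ∑' L : {L : List PlaneTree // (L.map size).sum = m}, (L.1.map (hookWeight ρ)).prod

lemma fseq_zero (ρ : ℕ → ℝ) : fseq ρ 0 = 0 := by
  haveI : IsEmpty {T : PlaneTree // T.size = 0} :=
    ⟨fun T => by have := one_le_size T.1; omega⟩
  letI := Fintype.ofFinite {T : PlaneTree // T.size = 0}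
  rw [fseq, tsum_fintype, Finset.univ_eq_empty, Finset.sum_empty]

lemma gseq_zero (ρ : ℕ → ℝ) : gseq ρ 0 = 1 := by
  haveI : Unique {L : List PlaneTree // (L.map size).sum = 0} := by
    refine ⟨⟨⟨[], rfl⟩⟩, ?_⟩
    rintro ⟨L, hL⟩
    cases L with
    | nil => rfl
    | cons T L' =>
      exfalso
      simp only [List.map_cons, List.sum_cons] at hL
      have := one_le_size T
      omega
  rw [gseq, tsum_eq_single (⟨[], rfl⟩ : {L : List PlaneTree // (L.map size).sum = 0})
    (fun b hb => absurd (Subsingleton.elim b _) hb)]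
  simp

/-- Trees of size n (n ≥ 1) correspond to lists of subtrees of total size n-1. -/
noncomputable def treeEquiv (n : ℕ) (hn : 1 ≤ n) :
    {L : List PlaneTree // (L.map size).sum = n - 1} ≃ {T : PlaneTree // T.size = n} where
  toFun L := ⟨node L.1, by rw [size_node, L.2]; omega⟩
  invFun T := match T with
    | ⟨node ts, hT⟩ => ⟨ts, by rw [size_node] at hT; omega⟩
  left_inv L := rfl
  right_inv T := by
    obtain ⟨T, hT⟩ := T
    cases T with
    | node ts => rfl

lemma fseq_eq (ρ : ℕ → ℝ) (n : ℕ) (hn : 1 ≤ n) : fseq ρ n = ρ n * gseq ρ (n - 1) := by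
  letI := Fintype.ofFinite {T : PlaneTree // T.size = n}
  letI := Fintype.ofFinite {L : List PlaneTree // (L.map size).sum = n - 1}
  rw [fseq, gseq, tsum_fintype, tsum_fintype, ← Equiv.sum_comp (treeEquiv n hn),
    Finset.mul_sum]
  refine Finset.sum_congr rfl fun L _ => ?_
  simp only [treeEquiv, Equiv.coe_fn_mk, hookWeight_node, size_node, L.2]
  congr 2
  omega

noncomputable def consMap (m : ℕ) :
    (Σ k : Fin (m + 1), {T : PlaneTree // T.size = (k : ℕ)} ×
      {L : List PlaneTree // (L.map size).sum = m - (k : ℕ)}) →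
    {L : List PlaneTree // (L.map size).sum = m}
  | ⟨k, T, L⟩ => ⟨T.1 :: L.1, by
      simp only [List.map_cons, List.sum_cons, T.2, L.2]
      have := k.isLt
      have := T.1.one_le_size
      rw [T.2] at this
      omega⟩

lemma consMap_bijective (m : ℕ) (hm : 1 ≤ m) : Function.Bijective (consMap m) := by
  constructor
  · rintro ⟨k, T, L⟩ ⟨k', T', L'⟩ h
    simp only [consMap, Subtype.mk.injEq, List.cons.injEq] at h
    obtain ⟨hT, hL⟩ := h
    have hk : k = k' := by
      apply Fin.ext
      rw [← T.2, ← T'.2, hT]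
    subst hk
    exact congrArg (Sigma.mk k) (Prod.ext (Subtype.ext hT) (Subtype.ext hL))
  · rintro ⟨L, hL⟩
    cases L with
    | nil =>
      exfalso
      simp only [List.map_nil, List.sum_nil] at hL
      omega
    | cons T L' =>
      simp only [List.map_cons, List.sum_cons] at hL
      refine ⟨⟨⟨T.size, by have := T.one_le_size; omega⟩, ⟨T, rfl⟩, ⟨L', by simp; omega⟩⟩, ?_⟩
      rfl

lemma gseq_rec (ρ : ℕ → ℝ) (m : ℕ) (hm : 1 ≤ m) :
    gseq ρ m = ∑ k ∈ Finset.range (m + 1), fseq ρ k * gseq ρ (m - k) := by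
  letI I1 : ∀ k : ℕ, Fintype {T : PlaneTree // T.size = k} := fun k => Fintype.ofFinite _
  letI I2 : ∀ j : ℕ, Fintype {L : List PlaneTree // (L.map size).sum = j} :=
    fun j => Fintype.ofFinite _
  have key : ∀ k j : ℕ, fseq ρ k * gseq ρ j =
      ∑ p : {T : PlaneTree // T.size = k} × {L : List PlaneTree // (L.map size).sum = j},
        hookWeight ρ p.1.1 * (p.2.1.map (hookWeight ρ)).prod := by
    intro k j
    rw [fseq, gseq, tsum_fintype, tsum_fintype, Fintype.sum_prod_type, Finset.sum_mul_sum]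
  rw [gseq, tsum_fintype,
    ← Fintype.sum_bijective (consMap m) (consMap_bijective m hm)
      (fun x => ((consMap m x).1.map (hookWeight ρ)).prod)
      (fun L => (L.1.map (hookWeight ρ)).prod) (fun x => rfl),
    ← Finset.univ_sigma_univ, Finset.sum_sigma, ← Fin.sum_univ_eq_sum_range]
  refine Finset.sum_congr rfl fun k _ => ?_
  rw [key]
  refine Finset.sum_congr rfl fun p _ => ?_
  simp [consMap]


/-- **Hook length formula for plane forests** (forest version with
`φ(t) = 1/(1−t)`, compositional inverse `φ^{[-1]}(t) = 1 − 1/t`). With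
`F` the hook-weight generating function of plane trees and `G = (1 − F)⁻¹`
the plane forest generating function, for all `n ≥ 1`:
`ρ(n)·[z^{n-1}]G(z) = −[zⁿ] G(z)⁻¹`. -/
theorem hook_length_plane_forests
    (ρ : ℕ → ℝ) (F G : PowerSeries ℝ)
    (hF : F = PowerSeries.mk fun n =>
      ∑' T : {T : PlaneTree // T.size = n}, T.1.hookWeight ρ)
    (hG : G = (1 - F)⁻¹)
    (n : ℕ) (hn : 1 ≤ n) :
    ρ n * (PowerSeries.coeff (R := ℝ) (n - 1)) G = -(PowerSeries.coeff (R := ℝ) n) G⁻¹ := by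
  have hf : ∀ p, PowerSeries.coeff p F = fseq ρ p := by
    intro p; rw [hF, PowerSeries.coeff_mk]; rfl
  set G' : PowerSeries ℝ := PowerSeries.mk (gseq ρ) with hG'
  have hg : ∀ p, PowerSeries.coeff p G' = gseq ρ p := fun p => PowerSeries.coeff_mk _ _
  have hconst : PowerSeries.constantCoeff (1 - F) ≠ 0 := by
    rw [map_sub, map_one, ← PowerSeries.coeff_zero_eq_constantCoeff, hf, fseq_zero]
    norm_num
  have hmul : (1 - F) * G' = 1 := by
    ext p
    rw [sub_mul, one_mul, map_sub, PowerSeries.coeff_mul]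
    rw [Finset.Nat.sum_antidiagonal_eq_sum_range_succ_mk]
    simp only [hf, hg]
    cases p with
    | zero => simp [gseq_zero, fseq_zero, PowerSeries.coeff_one]
    | succ q =>
      rw [PowerSeries.coeff_one, if_neg (Nat.succ_ne_zero q)]
      have := gseq_rec ρ (q + 1) (Nat.succ_le_succ (Nat.zero_le q))
      rw [sub_eq_zero, this]
  have hGG' : G = G' := by
    rw [hG, eq_comm]
    exact (PowerSeries.eq_inv_iff_mul_eq_one hconst).2 (by rw [mul_comm]; exact hmul)
  have hconstG : PowerSeries.constantCoeff G ≠ 0 := by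
    rw [hGG', ← PowerSeries.coeff_zero_eq_constantCoeff, hg, gseq_zero]
    norm_num
  have hGinv : G⁻¹ = 1 - F := by
    rw [PowerSeries.inv_eq_iff_mul_eq_one hconstG, hGG', hmul]
  rw [hGinv, hGG', hg, map_sub, hf, PowerSeries.coeff_one, if_neg (by omega : n ≠ 0),
    ← fseq_eq ρ n hn]
  ring
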